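/- Let G be a Lie group with Lie algebra 𝔤 and ψ(s) = exp(sU) a one-parameter subgroup whose closure K in G is not ψ(ℝ). Then K is not isomorphic (as a topological group) to ℝ × K₁ for any connected abelian Lie group K₁ with the projection to ℝ restricting to an isomorphism on ψ(ℝ); equivalently, the closure of a non-closed one-parameter subgroup of a Lie group is compact. -/

import Mathlib

open scoped Manifold

open Filter Topology Set
open scoped Pointwise

/-- The closure of a non-closed one-parameter subgroup `ψ(s) = exp(sU)` of a Lie group
is compact (equivalently, it cannot be of the form `ℝ × K₁`). -/
theorem stmt_1 {E : Type*} [NormedAddCommGroup E] [NormedSpace ℝ E] [FiniteDimensional ℝ E]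
    {H : Type*} [TopologicalSpace H] {I : ModelWithCorners ℝ E H}
    {G : Type*} [TopologicalSpace G] [ChartedSpace H G] [Group G] [LieGroup I (⊤ : ℕ∞) G] [T2Space G]
    (ψ : ℝ → G) (hψhom : ∀ s t : ℝ, ψ (s + t) = ψ s * ψ t) (hψcont : Continuous ψ)
    (hnotclosed : ¬ IsClosed (Set.range ψ)) :
    IsCompact (closure (Set.range ψ)) := by
  haveI : IsTopologicalGroup G := topologicalGroup_of_lieGroup I (⊤ : ℕ∞)
  haveI : LocallyCompactSpace G := Manifold.locallyCompact_of_finiteDimensional I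
  -- basic facts about ψ
  have hψ0 : ψ 0 = 1 := by
    have h := hψhom 0 0
    rw [add_zero] at h
    exact (left_eq_mul.mp h)
  have hψinv : ∀ t : ℝ, ψ (-t) = (ψ t)⁻¹ := by
    intro t
    have h := hψhom (-t) t
    rw [neg_add_cancel, hψ0] at h
    exact eq_inv_of_mul_eq_one_left h.symm
  have hψsub : ∀ s t : ℝ, ψ (s - t) = ψ s * (ψ t)⁻¹ := by
    intro s t
    rw [sub_eq_add_neg, hψhom, hψinv]
  have hψsub' : ∀ s t : ℝ, ψ (s - t) = (ψ t)⁻¹ * ψ s := by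
    intro s t
    rw [show s - t = -t + s by ring, hψhom, hψinv]
  set R : Set G := Set.range ψ with hR
  -- a "small pair" lemma
  have hpair : ∀ U ∈ 𝓝 (1 : G), ∃ V : Set G, IsOpen V ∧ (1 : G) ∈ V ∧
      (∀ a ∈ V, ∀ b ∈ V, a⁻¹ * b ∈ U) ∧ (∀ a ∈ V, ∀ b ∈ V, a * b⁻¹ ∈ U) := by
    intro U hU
    obtain ⟨V₀, hV₀open, hV₀1, hV₀U⟩ := exists_open_nhds_one_mul_subset hU
    refine ⟨V₀ ∩ V₀⁻¹, hV₀open.inter hV₀open.inv, ⟨hV₀1, by simpa using hV₀1⟩, ?_, ?_⟩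
    · intro a ha b hb
      exact hV₀U (Set.mul_mem_mul (Set.mem_inv.mp ha.2) hb.1)
    · intro a ha b hb
      exact hV₀U (Set.mul_mem_mul ha.1 (Set.mem_inv.mp hb.2))
  -- compact symmetric neighborhood of 1
  obtain ⟨K, hKc, hK1⟩ := exists_compact_mem_nhds (1 : G)
  set C : Set G := K ∩ K⁻¹ with hCdef
  have hCc : IsCompact C := hKc.inter_right hKc.inv.isClosed
  have hC1 : C ∈ 𝓝 (1 : G) := by
    refine Filter.inter_mem hK1 ?_
    have h := (continuous_inv.continuousAt (x := (1 : G))).preimage_mem_nhds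
      (by simpa using hK1)
    rwa [Set.inv_preimage] at h
  have hCsymm : ∀ g ∈ C, g⁻¹ ∈ C := by
    intro g hg
    exact ⟨Set.mem_inv.mp hg.2, by simpa using hg.1⟩
  obtain ⟨V, hVopen, hV1, hVkey, hVkey'⟩ := hpair C hC1
  have hVC : V ⊆ C := by
    intro b hb
    have := hVkey 1 hV1 b hb
    simpa using this
  -- the return-time set
  set S : Set ℝ := {t : ℝ | ψ t ∈ C} with hSdef
  have hS0 : (0 : ℝ) ∈ S := by
    show ψ 0 ∈ C
    rw [hψ0]; exact mem_of_mem_nhds hC1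
  have hSsymm : ∀ t ∈ S, -t ∈ S := by
    intro t ht
    show ψ (-t) ∈ C
    rw [hψinv]
    exact hCsymm _ ht
  have hSclosed : IsClosed S := hCc.isClosed.preimage hψcont
  by_cases hsyn : ∃ L : ℝ, 0 < L ∧ ∀ t : ℝ, ∃ s ∈ S, t ≤ s ∧ s ≤ t + L
  · -- syndetic case : the closure is contained in a compact set
    obtain ⟨L, hL, hLsyn⟩ := hsyn
    have hsub : R ⊆ C * (ψ '' Set.Icc 0 L) := by
      rintro - ⟨t, rfl⟩
      obtain ⟨s, hsS, hs1, hs2⟩ := hLsyn (t - L)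
      have : ψ t = ψ s * ψ (t - s) := by
        rw [← hψhom]; ring_nf
      rw [this]
      exact Set.mul_mem_mul hsS ⟨t - s, ⟨by linarith, by linarith⟩, rfl⟩
    have hQc : IsCompact (C * (ψ '' Set.Icc 0 L)) :=
      hCc.mul (isCompact_Icc.image hψcont)
    exact hQc.of_isClosed_subset isClosed_closure
      (closure_minimal hsub hQc.isClosed)
  · by_cases hbdd : ∃ T : ℝ, ∀ s ∈ S, |s| ≤ T
    · -- S bounded : the range is closed, contradiction
      exfalso
      apply hnotclosed
      obtain ⟨T, hT⟩ := hbdd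
      apply isClosed_of_closure_subset
      intro x hx
      set O : Set G := (fun g => x⁻¹ * g) ⁻¹' V with hOdef
      have hOopen : IsOpen O := hVopen.preimage (continuous_mul_left x⁻¹)
      have hxO : x ∈ O := by
        show x⁻¹ * x ∈ V
        simpa using hV1
      obtain ⟨y, hyO, t₀, rfl⟩ := mem_closure_iff.mp hx O hOopen hxO
      have hmemIcc : ∀ t : ℝ, ψ t ∈ O → t ∈ Set.Icc (t₀ - T) (t₀ + T) := by
        intro t ht
        have h1 : ψ (t - t₀) ∈ C := by
          have : ψ (t - t₀) = (x⁻¹ * ψ t₀)⁻¹ * (x⁻¹ * ψ t) := by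
            rw [hψsub']; group
          rw [this]
          exact hVkey _ hyO _ ht
        have h2 : |t - t₀| ≤ T := hT _ h1
        have := abs_le.mp h2
        constructor <;> linarith [this.1, this.2]
      have hxcl : x ∈ closure (ψ '' Set.Icc (t₀ - T) (t₀ + T)) := by
        rw [mem_closure_iff]
        intro O' hO' hxO'
        obtain ⟨y, ⟨hy1, hy2⟩, t, rfl⟩ :=
          mem_closure_iff.mp hx (O' ∩ O) (hO'.inter hOopen) ⟨hxO', hxO⟩
        exact ⟨ψ t, hy1, t, hmemIcc t hy2, rfl⟩
      have hPc : IsCompact (ψ '' Set.Icc (t₀ - T) (t₀ + T)) :=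
        isCompact_Icc.image hψcont
      rw [hPc.isClosed.closure_eq] at hxcl
      obtain ⟨t, -, rfl⟩ := hxcl
      exact ⟨t, rfl⟩
    · -- S unbounded with unbounded gaps : contradiction
      exfalso
      push_neg at hbdd hsyn
      -- S is unbounded above
      have habs : ∀ s ∈ S, |s| ∈ S := by
        intro s hs
        rcases abs_cases s with ⟨h1, -⟩ | ⟨h1, -⟩
        · rw [h1]; exact hs
        · rw [h1]; exact hSsymm s hs
      have hub : ∀ T : ℝ, ∃ s ∈ S, T ≤ s := by
        intro T
        obtain ⟨s, hsS, hs⟩ := hbdd |T|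
        exact ⟨|s|, habs s hsS, by linarith [le_abs_self T]⟩
      -- returns to arbitrary neighborhoods of 1 at arbitrarily large times
      have returns : ∀ W : Set G, IsOpen W → (1 : G) ∈ W →
          ∀ T : ℝ, ∃ r : ℝ, T ≤ r ∧ ψ r ∈ W := by
        intro W hWopen hW1
        obtain ⟨W₀, hW₀open, hW₀1, -, hW₀key⟩ := hpair W (hWopen.mem_nhds hW1)
        -- a sequence in S going to infinity
        have : ∀ n : ℕ, ∃ s ∈ S, (n : ℝ) ≤ s := fun n => hub n
        choose u huS hun using this
        have hmap : Filter.map (fun n => ψ (u n)) Filter.atTop ≤ Filter.principal C := by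
          rw [Filter.le_principal_iff, Filter.mem_map]
          exact Filter.Eventually.of_forall fun n => huS n
        obtain ⟨q, hqC, hq⟩ := hCc.exists_mapClusterPt hmap
        intro T
        set N : Set G := (fun g => g * q⁻¹) ⁻¹' W₀ with hNdef
        have hNopen : IsOpen N := hW₀open.preimage (continuous_mul_right q⁻¹)
        have hqN : q ∈ N := by
          show q * q⁻¹ ∈ W₀
          simpa using hW₀1
        have hfreq : ∃ᶠ n in Filter.atTop, ψ (u n) ∈ N :=
          mapClusterPt_iff_frequently.mp hq N (hNopen.mem_nhds hqN)
        obtain ⟨m, hmN⟩ := hfreq.exists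
        obtain ⟨n, hnN, hn⟩ :=
          (hfreq.and_eventually (Filter.eventually_ge_atTop ⌈u m + T⌉₊)).exists
        have hnR : u m + T ≤ u n := by
          calc u m + T ≤ (⌈u m + T⌉₊ : ℝ) := Nat.le_ceil _
          _ ≤ (n : ℝ) := by exact_mod_cast hn
          _ ≤ u n := hun n
        refine ⟨u n - u m, by linarith, ?_⟩
        have : ψ (u n - u m) = (ψ (u n) * q⁻¹) * (ψ (u m) * q⁻¹)⁻¹ := by
          rw [hψsub]; group
        rw [this]
        exact hW₀key _ hnN _ hmN
      -- construct gaps immediately to the right of points of S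
      have hgaps : ∀ k : ℕ, ∃ s ∈ S, ∀ u : ℝ, 0 < u → u ≤ (k : ℝ) + 1 → s + u ∉ S := by
        intro k
        obtain ⟨t, ht⟩ := hsyn ((k : ℝ) + 1) (by positivity)
        -- S ∩ Iic t is nonempty closed bounded above
        have hne : (S ∩ Set.Iic t).Nonempty := by
          obtain ⟨s, hsS, hs⟩ := hbdd |t|
          refine ⟨-|s|, hSsymm _ (habs s hsS), ?_⟩
          show -|s| ≤ t
          linarith [neg_abs_le t]
        have hbdda : BddAbove (S ∩ Set.Iic t) := ⟨t, fun y hy => hy.2⟩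
        have hclosed : IsClosed (S ∩ Set.Iic t) := hSclosed.inter isClosed_Iic
        have hmem := hclosed.csSup_mem hne hbdda
        set s := sSup (S ∩ Set.Iic t) with hsdef
        have hst : s ≤ t := hmem.2
        refine ⟨s, hmem.1, ?_⟩
        intro u hu hu' hcon
        by_cases hle : s + u ≤ t
        · have : s + u ≤ s := le_csSup hbdda ⟨hcon, hle⟩
          linarith
        · push_neg at hle
          have := ht (s + u) hcon (by linarith)
          linarith
      choose sq hsqS hsqgap using hgaps
      have hmap : Filter.map (fun k => ψ (sq k)) Filter.atTop ≤ Filter.principal C := by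
        rw [Filter.le_principal_iff, Filter.mem_map]
        exact Filter.Eventually.of_forall fun k => hsqS k
      obtain ⟨p, hpC, hp⟩ := hCc.exists_mapClusterPt hmap
      -- the forward orbit avoids p⁻¹ • V
      have claim : ∀ u : ℝ, 0 < u → p * ψ u ∉ V := by
        intro u hu hmem
        set N : Set G := (fun g => g * ψ u) ⁻¹' V with hNdef
        have hNopen : IsOpen N := hVopen.preimage (continuous_mul_right (ψ u))
        have hpN : p ∈ N := hmem
        have hfreq : ∃ᶠ k in Filter.atTop, ψ (sq k) ∈ N :=
          mapClusterPt_iff_frequently.mp hp N (hNopen.mem_nhds hpN)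
        obtain ⟨k, hkN, hk⟩ :=
          (hfreq.and_eventually (Filter.eventually_ge_atTop ⌈u⌉₊)).exists
        have hukk : u ≤ (k : ℝ) + 1 := by
          calc u ≤ (⌈u⌉₊ : ℝ) := Nat.le_ceil _
          _ ≤ (k : ℝ) := by exact_mod_cast hk
          _ ≤ (k : ℝ) + 1 := by linarith
        apply hsqgap k u hu hukk
        show ψ (sq k + u) ∈ C
        rw [hψhom]
        exact hVC hkN
      -- but p⁻¹ is in the closure of the range, and the forward orbit is dense
      have hpinv : p⁻¹ ∈ closure R := by
        rw [mem_closure_iff]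
        intro O hOopen hpO
        have hO' : IsOpen O⁻¹ := hOopen.inv
        have hpO' : p ∈ O⁻¹ := by simpa using hpO
        have hfreq : ∃ᶠ k in Filter.atTop, ψ (sq k) ∈ O⁻¹ :=
          mapClusterPt_iff_frequently.mp hp O⁻¹ (hO'.mem_nhds hpO')
        obtain ⟨k, hk⟩ := hfreq.exists
        refine ⟨ψ (-(sq k)), ?_, ⟨-(sq k), rfl⟩⟩
        rw [hψinv]
        exact Set.mem_inv.mp hk
      set O : Set G := (fun g => p * g) ⁻¹' V with hOdef
      have hOopen : IsOpen O := hVopen.preimage (continuous_mul_left p)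
      have hpO : p⁻¹ ∈ O := by
        show p * p⁻¹ ∈ V
        simpa using hV1
      obtain ⟨y, hyO, t₀, rfl⟩ := mem_closure_iff.mp hpinv O hOopen hpO
      -- push t₀ forward to a positive time using returns
      set W : Set G := (fun g => (p * ψ t₀) * g) ⁻¹' V with hWdef
      have hWopen : IsOpen W := hVopen.preimage (continuous_mul_left (p * ψ t₀))
      have hW1 : (1 : G) ∈ W := by
        show (p * ψ t₀) * 1 ∈ V
        simpa [hOdef] using hyO
      obtain ⟨r, hr, hrW⟩ := returns W hWopen hW1 (1 - t₀)
      refine claim (t₀ + r) (by linarith) ?_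
      have : p * ψ (t₀ + r) = (p * ψ t₀) * ψ r := by
        rw [hψhom, mul_assoc]
      rw [this]
      exact hrW
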